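/- arXiv:1403.5479 — 3 statements merged into one kernel-verified Lean document; each statement's English description precedes it below -/
import Mathlib

section
/- Let λ > 0 and let t, τ be reals with 0 ≤ t ≤ τ. Then ∫_{-∞}^{∞} (1 − exp(−λ · max(min(t, a + τ) − max(a, 0), 0))) da = 2t + (1 − e^{−λt})(τ − t − 2/λ). -/
open MeasureTheory Real

private lemma box_aux (l : ℝ) (hl : l ≠ 0) (c p q : ℝ) :
    ∫ x in p..q, (1 - Real.exp (c + l * x)) =
      (q - p) - (Real.exp (c + l * q) - Real.exp (c + l * p)) / l := by
  have h : ∀ x ∈ Set.uIcc p q,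
      HasDerivAt (fun y => y - Real.exp (c + l * y) / l) (1 - Real.exp (c + l * x)) x := by
    intro x _
    have h1 := (hasDerivAt_id x).sub
      (((((hasDerivAt_id x).const_mul l).const_add c).exp).div_const l)
    refine HasDerivAt.congr_deriv h1 ?_
    simp [hl]
  have hint : IntervalIntegrable (fun x => 1 - Real.exp (c + l * x)) volume p q :=
    (continuous_const.sub ((continuous_const.add (continuous_const.mul continuous_id)).rexp)).intervalIntegrable _ _
  rw [intervalIntegral.integral_eq_sub_of_hasDerivAt h hint]
  ring

/-- Deterministic core of the Box Model mean-function computation, case `τ ≥ t`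
(Proposition 2): for fixed rate `l > 0` and lifespan `τ ≥ t ≥ 0`,
`∫ (1 − exp(−l·|[a, a+τ] ∩ [0, t]|)) da = 2t + (1 − e^{−lt})(τ − t − 2/l)`. -/
theorem box_model_integral_of_le (l t τ : ℝ) (hl : 0 < l) (ht : 0 ≤ t) (htτ : t ≤ τ) :
    ∫ a : ℝ, (1 - Real.exp (-l * max (min t (a + τ) - max a 0) 0)) =
      2 * t + (1 - Real.exp (-l * t)) * (τ - t - 2 / l) := by
  have hl' : l ≠ 0 := ne_of_gt hl
  have hnl : (-l) ≠ 0 := neg_ne_zero.mpr hl'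
  set g : ℝ → ℝ := fun a => 1 - Real.exp (-l * max (min t (a + τ) - max a 0) 0) with hg
  have hgc : Continuous g := by
    apply continuous_const.sub
    apply Real.continuous_exp.comp
    exact continuous_const.mul
      (((continuous_const.min (continuous_id.add continuous_const)).sub
        (continuous_id.max continuous_const)).max continuous_const)
  have hzero : ∀ a ∉ Set.Ioc (-τ) t, g a = 0 := by
    intro a ha
    simp only [Set.mem_Ioc, not_and_or, not_lt, not_le] at ha
    have : max (min t (a + τ) - max a 0) 0 = 0 := by
      rcases ha with h | h
      · have h1 : min t (a + τ) ≤ a + τ := min_le_right _ _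
        have h3 : (0:ℝ) ≤ max a 0 := le_max_right _ _
        exact max_eq_right (by linarith)
      · have h1 : min t (a + τ) ≤ t := min_le_left _ _
        have h2 : a ≤ max a 0 := le_max_left _ _
        exact max_eq_right (by linarith)
    simp [hg, this]
  have step1 : ∫ a : ℝ, g a = ∫ a in Set.Ioc (-τ) t, g a :=
    (setIntegral_eq_integral_of_forall_compl_eq_zero hzero).symm
  have hτt : -τ ≤ t := by linarith
  have step2 : ∫ a in Set.Ioc (-τ) t, g a = ∫ a in (-τ)..t, g a :=
    (intervalIntegral.integral_of_le hτt).symm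
  have hI : ∀ p q : ℝ, IntervalIntegrable g volume p q := fun p q =>
    hgc.intervalIntegrable p q
  have split : ∫ a in (-τ)..t, g a =
      (∫ a in (-τ)..(t - τ), g a) + (∫ a in (t - τ)..0, g a) + ∫ a in (0:ℝ)..t, g a := by
    rw [intervalIntegral.integral_add_adjacent_intervals (hI _ _) (hI _ _),
      intervalIntegral.integral_add_adjacent_intervals (hI _ _) (hI _ _)]
  have e1 : ∫ a in (-τ)..(t - τ), g a =
      ∫ a in (-τ)..(t - τ), (1 - Real.exp ((-l * τ) + (-l) * a)) := by
    apply intervalIntegral.integral_congr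
    intro a ha
    rw [Set.uIcc_of_le (by linarith)] at ha
    obtain ⟨h1, h2⟩ := ha
    have hmax : max a 0 = 0 := max_eq_right (by linarith)
    have hmin : min t (a + τ) = a + τ := min_eq_right (by linarith)
    have hmm : max (min t (a + τ) - max a 0) 0 = a + τ := by
      rw [hmax, hmin, sub_zero]; exact max_eq_left (by linarith)
    simp only [hg, hmm]
    ring_nf
  have e2 : ∫ a in (t - τ)..0, g a = (τ - t) * (1 - Real.exp (-l * t)) := by
    have hc : ∀ a ∈ Set.uIcc (t - τ) 0, g a = 1 - Real.exp (-l * t) := by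
      intro a ha
      rw [Set.uIcc_of_le (by linarith)] at ha
      obtain ⟨h1, h2⟩ := ha
      have hmax : max a 0 = 0 := max_eq_right h2
      have hmin : min t (a + τ) = t := min_eq_left (by linarith)
      have hmm : max (min t (a + τ) - max a 0) 0 = t := by
        rw [hmax, hmin, sub_zero]; exact max_eq_left ht
      simp [hg, hmm]
    rw [intervalIntegral.integral_congr hc, intervalIntegral.integral_const, smul_eq_mul]
    ring
  have e3 : ∫ a in (0:ℝ)..t, g a =
      ∫ a in (0:ℝ)..t, (1 - Real.exp ((-l * t) + l * a)) := by
    apply intervalIntegral.integral_congr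
    intro a ha
    rw [Set.uIcc_of_le ht] at ha
    obtain ⟨h1, h2⟩ := ha
    have hmax : max a 0 = a := max_eq_left h1
    have hmin : min t (a + τ) = t := min_eq_left (by linarith)
    have hmm : max (min t (a + τ) - max a 0) 0 = t - a := by
      rw [hmax, hmin]; exact max_eq_left (by linarith)
    simp only [hg, hmm]
    ring_nf
  rw [step1, step2, split, e1, e2, e3, box_aux (-l) hnl, box_aux l hl']
  rw [show -l * τ + -l * (t - τ) = -l * t by ring,
    show -l * τ + -l * -τ = 0 by ring,
    show -l * t + l * t = 0 by ring,
    show -l * t + l * 0 = -l * t by ring, Real.exp_zero]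
  field_simp
  ring
end

section
/- Let λ > 0 and let t, τ be reals with 0 < τ < t. Then ∫_{-∞}^{∞} (1 − exp(−λ · max(min(t, a + τ) − max(a, 0), 0))) da = 2τ + (1 − e^{−λτ})(t − τ − 2/λ). -/
open MeasureTheory Real

/-- Deterministic core of the Box Model mean-function computation, case `τ < t`
(Proposition 2): for fixed rate `l > 0` and lifespan `0 < τ < t`,
`∫ (1 − exp(−l·|[a, a+τ] ∩ [0, t]|)) da = 2τ + (1 − e^{−lτ})(t − τ − 2/l)`. -/
theorem box_model_integral_of_lt (l t τ : ℝ) (hl : 0 < l) (hτ : 0 < τ) (hτt : τ < t) :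
    ∫ a : ℝ, (1 - Real.exp (-l * max (min t (a + τ) - max a 0) 0)) =
      2 * τ + (1 - Real.exp (-l * τ)) * (t - τ - 2 / l) := by
  set F : ℝ → ℝ := fun a => 1 - Real.exp (-l * max (min t (a + τ) - max a 0) 0) with hF
  have hcont : Continuous F := by
    apply Continuous.sub continuous_const
    exact (Continuous.mul continuous_const (Continuous.max (Continuous.sub
      (Continuous.min continuous_const (continuous_id.add continuous_const))
      (Continuous.max continuous_id continuous_const)) continuous_const)).rexp
  have hzero : ∀ a, a ∉ Set.Ioc (-τ) t → F a = 0 := by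
    intro a ha
    rw [Set.mem_Ioc, not_and_or, not_lt, not_le] at ha
    have : max (min t (a + τ) - max a 0) 0 = 0 := by
      rcases ha with h | h
      · exact max_eq_right (sub_nonpos.mpr ((min_le_right _ _).trans
          (by linarith [le_max_right a 0])))
      · exact max_eq_right (sub_nonpos.mpr ((min_le_left _ _).trans
          (by linarith [le_max_left a 0])))
    simp [hF, this]
  have h1 : (∫ a : ℝ, F a) = ∫ a in Set.Ioc (-τ) t, F a :=
    (setIntegral_eq_integral_of_forall_compl_eq_zero hzero).symm
  have h2 : (∫ a in Set.Ioc (-τ) t, F a) = ∫ a in (-τ)..t, F a :=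
    (intervalIntegral.integral_of_le (by linarith)).symm
  have hi : ∀ u v : ℝ, IntervalIntegrable F volume u v :=
    fun u v => hcont.intervalIntegrable u v
  have hsplit : (∫ a in (-τ)..t, F a) =
      (∫ a in (-τ)..(0:ℝ), F a) + (∫ a in (0:ℝ)..(t-τ), F a) + (∫ a in (t-τ)..t, F a) := by
    rw [intervalIntegral.integral_add_adjacent_intervals (hi _ _) (hi _ _),
        intervalIntegral.integral_add_adjacent_intervals (hi _ _) (hi _ _)]
  have e1 : (∫ a in (-τ)..(0:ℝ), F a) = τ + Real.exp (-l*τ)/l - 1/l := by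
    have : (∫ a in (-τ)..(0:ℝ), F a) = ∫ a in (-τ)..(0:ℝ), (1 - Real.exp (-l*(a+τ))) := by
      apply intervalIntegral.integral_congr
      intro a ha
      rw [Set.uIcc_of_le (by linarith)] at ha
      obtain ⟨h1, h2⟩ := ha
      have e1 : max a 0 = 0 := max_eq_right h2
      have e2 : min t (a + τ) = a + τ := min_eq_right (by linarith)
      simp only [hF, e1, e2, sub_zero]
      rw [max_eq_left (by linarith)]
    rw [this]
    have : ∀ a ∈ Set.uIcc (-τ) (0:ℝ), HasDerivAt (fun a => a + Real.exp (-l*(a+τ))/l)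
        (1 - Real.exp (-l*(a+τ))) a := by
      intro a _
      have h := ((hasDerivAt_id a).add_const τ).const_mul (-l)
      have h2 := (h.exp).div_const l
      refine ((hasDerivAt_id a).add h2).congr_deriv ?_
      simp only [id]
      field_simp
      ring
    rw [intervalIntegral.integral_eq_sub_of_hasDerivAt this
      ((Continuous.sub continuous_const ((continuous_const.mul (continuous_id.add continuous_const)).rexp)).intervalIntegrable _ _)]
    simp
    ring_nf
  have e2 : (∫ a in (0:ℝ)..(t-τ), F a) = (t - τ) * (1 - Real.exp (-l*τ)) := by
    have : (∫ a in (0:ℝ)..(t-τ), F a) = ∫ a in (0:ℝ)..(t-τ), (1 - Real.exp (-l*τ)) := by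
      apply intervalIntegral.integral_congr
      intro a ha
      rw [Set.uIcc_of_le (by linarith)] at ha
      obtain ⟨h1, h2⟩ := ha
      have e1 : max a 0 = a := max_eq_left h1
      have e2 : min t (a + τ) = a + τ := min_eq_right (by linarith)
      simp only [hF, e1, e2]
      rw [show a + τ - a = τ by ring, max_eq_left (by linarith)]
    rw [this, intervalIntegral.integral_const, smul_eq_mul, sub_zero]
  have e3 : (∫ a in (t-τ)..t, F a) = τ + Real.exp (-l*τ)/l - 1/l := by
    have : (∫ a in (t-τ)..t, F a) = ∫ a in (t-τ)..t, (1 - Real.exp (-l*(t-a))) := by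
      apply intervalIntegral.integral_congr
      intro a ha
      rw [Set.uIcc_of_le (by linarith)] at ha
      obtain ⟨h1, h2⟩ := ha
      have e1 : max a 0 = a := max_eq_left (by linarith)
      have e2 : min t (a + τ) = t := min_eq_left (by linarith)
      simp only [hF, e1, e2]
      rw [max_eq_left (by linarith)]
    rw [this]
    have : ∀ a ∈ Set.uIcc (t-τ) t, HasDerivAt (fun a => a - Real.exp (-l*(t-a))/l)
        (1 - Real.exp (-l*(t-a))) a := by
      intro a _
      have h := ((hasDerivAt_id a).const_sub t).const_mul (-l)
      have h2 := (h.exp).div_const l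
      refine ((hasDerivAt_id a).sub h2).congr_deriv ?_
      simp only [id]
      field_simp
    rw [intervalIntegral.integral_eq_sub_of_hasDerivAt this
      ((Continuous.sub continuous_const ((continuous_const.mul (continuous_const.sub continuous_id)).rexp)).intervalIntegrable _ _)]
    simp
    field_simp
    ring
  rw [h1, h2, hsplit, e1, e2, e3]
  field_simp
  ring
end

section
/- Let λ > 0 and let c, τ be reals with 0 < c ≤ τ. Then the series ∑_{k=2}^{∞} (k − 1) · (1 − (1 − c/τ)^k) · e^{−λτ} (λτ)^k / k! converges and equals (λτ − 1)(1 − e^{−λc}) + λc · e^{−λc}. -/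
open Real

lemma hasSum_exp' (x : ℝ) : HasSum (fun n : ℕ => x ^ n / n.factorial) (Real.exp x) := by
  rw [Real.exp_eq_exp_ℝ]
  exact NormedSpace.expSeries_div_hasSum_exp x

lemma hasSum_mul_exp (x : ℝ) :
    HasSum (fun n : ℕ => (n : ℝ) * x ^ n / n.factorial) (x * Real.exp x) := by
  have h := (hasSum_exp' x).mul_left x
  have h2 : HasSum (fun n : ℕ => ((n+1 : ℕ) : ℝ) * x ^ (n+1) / (n+1).factorial) (x * Real.exp x) := by
    refine h.congr_fun fun n => ?_
    rw [Nat.factorial_succ]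
    push_cast
    field_simp
    ring
  have := (hasSum_nat_add_iff (f := fun n : ℕ => (n : ℝ) * x ^ n / n.factorial) 1).mp h2
  simpa using this

/-- Case `τ ≥ t_C` of Proposition 3 (with `c = t_C`): summing the conditional
expected hit counts `(k−1)(1−(1−c/τ)^k)` against the Poisson(λτ) pmf gives
`(λτ − 1)(1 − e^{−λc}) + λc e^{−λc}`. -/
theorem poisson_hits_sum_truncated (lam c τ : ℝ) (hlam : 0 < lam) (hc : 0 < c) (hcτ : c ≤ τ) :
    HasSum (fun k : ℕ => if 2 ≤ k then
        ((k : ℝ) - 1) * (1 - (1 - c / τ) ^ k) *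
          (Real.exp (-(lam * τ)) * (lam * τ) ^ k / (Nat.factorial k)) else 0)
      ((lam * τ - 1) * (1 - Real.exp (-(lam * c))) + lam * c * Real.exp (-(lam * c))) := by
  have hτ : τ ≠ 0 := ne_of_gt (lt_of_lt_of_le hc hcτ)
  set μ := lam * τ with hμ
  set q := 1 - c / τ with hq
  have hqμ : q * μ = μ - lam * c := by
    rw [hq, hμ]; field_simp
  clear_value μ q
  clear hμ hq
  have H := ((((hasSum_mul_exp μ).sub (hasSum_exp' μ)).sub
      (hasSum_mul_exp (q * μ))).add (hasSum_exp' (q * μ))).mul_left (Real.exp (-μ))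
  have hval : Real.exp (-μ) * (μ * Real.exp μ - Real.exp μ - (q * μ) * Real.exp (q * μ)
      + Real.exp (q * μ)) =
      (μ - 1) * (1 - Real.exp (-(lam * c))) + lam * c * Real.exp (-(lam * c)) := by
    rw [hqμ, Real.exp_sub, Real.exp_neg, Real.exp_neg]
    field_simp
    ring
  rw [hval] at H
  refine H.congr_fun fun k => ?_
  match k with
  | 0 => norm_num
  | 1 => norm_num
  | (n+2) =>
    have h2 : 2 ≤ n + 2 := by omega
    rw [if_pos h2, mul_pow]
    push_cast
    ring
end
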